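/- For every positive integer n, the reduced factor complexity of the Thue–Morse sequence satisfies ρ_t^red(n) = 2(M_n − m_n + 1), where m_n (resp. M_n) is the minimum (resp. maximum) number of alternations among length-n factors of the Thue–Morse sequence. -/

import Mathlib

/-- The reduction of a word: replace each maximal run of identical characters
by a single character. -/
def red {α : Type*} [DecidableEq α] (w : List α) : List α :=
  w.destutter (· ≠ ·)

/-- The length-`k` factor of the infinite sequence `x` (1-indexed) starting at
position `i`. -/
def factorAt {α : Type*} (x : ℕ → α) (i k : ℕ) : List α :=
  (List.range k).map (fun j => x (i + j))

/-- The reduced factor complexity: the number of length-`n` factors of `x`,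
counted up to reduced-equivalence (`red v = red w`). -/
noncomputable def redFactorComplexity {α : Type*} [DecidableEq α]
    (x : ℕ → α) (n : ℕ) : ℕ :=
  Set.ncard { u : List α | ∃ i ≥ 1, u = red (factorAt x i n) }

/-- The Thue–Morse sequence (1-indexed): `t n` is the parity of the number of
1's in the binary expansion of `n - 1`. -/
def thueMorse (n : ℕ) : Bool :=
  decide ((Nat.digits 2 (n - 1)).sum % 2 = 1)

/-- The number of alternations (occurrences of 01 or 10) in a binary word. -/
def alt (w : List Bool) : ℕ :=
  (List.zipWith (fun a b => a != b) w w.tail).count true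

/-- The minimum number of alternations among length-`k` factors of Thue–Morse. -/
noncomputable def tmAltMin (k : ℕ) : ℕ :=
  sInf { a : ℕ | ∃ i ≥ 1, a = alt (factorAt thueMorse i k) }

/-- The maximum number of alternations among length-`k` factors of Thue–Morse. -/
noncomputable def tmAltMax (k : ℕ) : ℕ :=
  sSup { a : ℕ | ∃ i ≥ 1, a = alt (factorAt thueMorse i k) }

/-- The Thue–Morse morphism `0 → 01`, `1 → 10`. -/
def mu (w : List Bool) : List Bool :=
  w.flatMap (fun b => if b then [true, false] else [false, true])

/-- The regular paperfolding sequence (1-indexed): writing `n = n' * 2^k` with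
`n'` odd, `f n = 1` iff `n' ≡ 3 (mod 4)`. -/
def paperfold (n : ℕ) : Bool :=
  decide ((n / 2 ^ (n.factorization 2)) % 4 = 3)

/-- The reduced abelian complexity: the number of length-`n` factors of `x`,
counted up to the equivalence identifying `v` and `w` whenever `red v` is a
rearrangement of the characters of `red w`. -/
noncomputable def redAbelianComplexity {α : Type*} [DecidableEq α]
    (x : ℕ → α) (n : ℕ) : ℕ :=
  Set.ncard { m : Multiset α | ∃ i ≥ 1, m = ↑(red (factorAt x i n)) }

/- ### auxiliary -/

def altWord : Bool → ℕ → List Bool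
  | b, 0 => [b]
  | b, (a+1) => b :: altWord (!b) a

lemma altWord_length (b : Bool) (a : ℕ) : (altWord b a).length = a + 1 := by
  induction a generalizing b with
  | zero => rfl
  | succ a ih => simp [altWord, ih]

lemma altWord_head (b : Bool) (a : ℕ) : (altWord b a).head? = some b := by
  cases a <;> rfl

lemma altWord_inj : Function.Injective (fun p : Bool × ℕ => altWord p.1 p.2) := by
  rintro ⟨b, a⟩ ⟨b', a'⟩ h
  simp only at h
  have h1 : a = a' := by
    have := congrArg List.length h
    simpa [altWord_length] using this
  have h2 : b = b' := by
    have := congrArg List.head? h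
    simpa [altWord_head] using this
  simp [h1, h2]

lemma alt_nil : alt [] = 0 := rfl
lemma alt_single (a : Bool) : alt [a] = 0 := rfl

lemma alt_cons_cons (a b : Bool) (l : List Bool) :
    alt (a :: b :: l) = (if a = b then 0 else 1) + alt (b :: l) := by
  simp only [alt, List.tail_cons, List.zipWith_cons_cons, List.count_cons]
  rcases eq_or_ne a b with h | h <;> simp [h, Nat.add_comm]

lemma destutter'_eq (a : Bool) (l : List Bool) :
    l.destutter' (· ≠ ·) a = altWord a (alt (a :: l)) := by
  induction l generalizing a with
  | nil => simp [List.destutter'_nil, alt_single, altWord]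
  | cons b l ih =>
    rw [List.destutter'_cons, alt_cons_cons]
    rcases eq_or_ne a b with h | h
    · subst h; simp [ih]
    · have hb : b = !a := by cases a <;> cases b <;> simp_all
      simp [h, ih, hb, altWord, Nat.add_comm]

lemma red_cons (a : Bool) (l : List Bool) :
    red (a :: l) = altWord a (alt (a :: l)) := by
  rw [red, List.destutter_cons', destutter'_eq]

lemma alt_map_not (l : List Bool) : alt (l.map not) = alt l := by
  induction l with
  | nil => rfl
  | cons a l ih =>
    cases l with
    | nil => rfl
    | cons b l =>
      have h1 : alt ((a :: b :: l).map not) = (if a = b then 0 else 1) + alt ((b :: l).map not) := by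
        simp only [List.map_cons]
        rw [alt_cons_cons]
        congr 1
        cases a <;> cases b <;> simp
      rw [h1, alt_cons_cons]
      simp only [List.map_cons] at ih ⊢
      rw [ih]

lemma alt_le_alt_cons (a : Bool) (l : List Bool) : alt l ≤ alt (a :: l) := by
  cases l with
  | nil => simp [alt_nil]
  | cons b l => rw [alt_cons_cons]; omega

lemma alt_cons_le (a : Bool) (l : List Bool) : alt (a :: l) ≤ alt l + 1 := by
  cases l with
  | nil => simp [alt_nil, alt_single]
  | cons b l => rw [alt_cons_cons]; split <;> omega

lemma alt_le_alt_append (l : List Bool) (x : Bool) : alt l ≤ alt (l ++ [x]) := by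
  induction l with
  | nil => simp [alt_nil]
  | cons a l ih =>
    cases l with
    | nil => simp [alt_single]
    | cons b l =>
      have : (a :: b :: l) ++ [x] = a :: b :: (l ++ [x]) := by simp
      rw [this, alt_cons_cons, alt_cons_cons]
      have := ih
      simp only [List.cons_append] at this
      omega

lemma alt_append_le (l : List Bool) (x : Bool) : alt (l ++ [x]) ≤ alt l + 1 := by
  induction l with
  | nil => simp [alt_nil, alt_single]
  | cons a l ih =>
    cases l with
    | nil => rw [List.singleton_append, alt_cons_cons, alt_single, alt_single]; split <;> omega
    | cons b l =>
      have h : (a :: b :: l) ++ [x] = a :: b :: (l ++ [x]) := by simp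
      rw [h, alt_cons_cons, alt_cons_cons]
      have := ih
      simp only [List.cons_append] at this
      omega

lemma alt_le_length (l : List Bool) : alt l ≤ l.length := by
  calc alt l ≤ (List.zipWith (fun a b => a != b) l l.tail).length := List.count_le_length
  _ ≤ l.length := by rw [List.length_zipWith]; omega

/- ### factorAt lemmas -/

lemma factorAt_length {α : Type*} (x : ℕ → α) (i k : ℕ) : (factorAt x i k).length = k := by
  simp [factorAt]

lemma factorAt_zero {α : Type*} (x : ℕ → α) (i : ℕ) : factorAt x i 0 = [] := rfl

lemma factorAt_snoc {α : Type*} (x : ℕ → α) (i k : ℕ) :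
    factorAt x i (k + 1) = factorAt x i k ++ [x (i + k)] := by
  simp [factorAt, List.range_succ]

lemma factorAt_two {α : Type*} (x : ℕ → α) (j : ℕ) :
    factorAt x j 2 = [x j, x (j + 1)] := by
  simp [factorAt, List.range_succ]

lemma factorAt_add {α : Type*} (x : ℕ → α) (i a b : ℕ) :
    factorAt x i (a + b) = factorAt x i a ++ factorAt x (i + a) b := by
  induction b with
  | zero => simp [factorAt_zero]
  | succ b ih =>
    rw [← Nat.add_assoc, factorAt_snoc, factorAt_snoc, ih, List.append_assoc]
    congr 2
    ring_nf

lemma factorAt_one {α : Type*} (x : ℕ → α) (i : ℕ) : factorAt x i 1 = [x i] := by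
  simp [factorAt, List.range_succ]

lemma factorAt_succ {α : Type*} (x : ℕ → α) (i k : ℕ) :
    factorAt x i (k + 1) = x i :: factorAt x (i + 1) k := by
  have h := factorAt_add x i 1 k
  rw [factorAt_one] at h
  rw [Nat.add_comm] at h
  simpa using h

lemma factorAt_drop {α : Type*} (x : ℕ → α) (i d k : ℕ) (h : d ≤ k) :
    (factorAt x i k).drop d = factorAt x (i + d) (k - d) := by
  have : k = d + (k - d) := by omega
  rw [this, factorAt_add]
  rw [List.drop_append_of_le_length (by simp [factorAt_length])]
  simp [factorAt_length]

lemma factorAt_take {α : Type*} (x : ℕ → α) (i n k : ℕ) (h : n ≤ k) :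
    (factorAt x i k).take n = factorAt x i n := by
  have : k = n + (k - n) := by omega
  rw [this, factorAt_add]
  rw [List.take_append_of_le_length (by simp [factorAt_length])]
  simp [factorAt_length, factorAt]

/- ### Thue-Morse recurrences -/

lemma tm_one : thueMorse 1 = false := by simp [thueMorse]

lemma tm_even (k : ℕ) (hk : 1 ≤ k) : thueMorse (2 * k) = !thueMorse k := by
  have h1 : 2 * k - 1 = 2 * (k - 1) + 1 := by omega
  rw [thueMorse, thueMorse, h1]
  rw [Nat.digits_def' (by norm_num) (by omega)]
  have h2 : (2 * (k - 1) + 1) % 2 = 1 := by omega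
  have h3 : (2 * (k - 1) + 1) / 2 = k - 1 := by omega
  rw [h2, h3]
  simp only [List.sum_cons]
  rcases Nat.mod_two_eq_zero_or_one ((Nat.digits 2 (k - 1)).sum) with h | h <;>
    simp [Nat.add_mod, h]

lemma tm_odd (k : ℕ) (hk : 1 ≤ k) : thueMorse (2 * k - 1) = thueMorse k := by
  rcases Nat.eq_or_lt_of_le hk with h | h
  · rw [← h]
  · have hk2 : 2 ≤ k := h
    have h1 : 2 * k - 1 - 1 = 2 * (k - 1) := by omega
    rw [thueMorse, thueMorse, h1]
    rw [Nat.digits_def' (by norm_num) (by omega)]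
    have h2 : (2 * (k - 1)) % 2 = 0 := by omega
    have h3 : (2 * (k - 1)) / 2 = k - 1 := by omega
    rw [h2, h3]
    simp

/- ### mu lemmas -/

lemma mu_nil : mu [] = [] := rfl

lemma mu_singleton (b : Bool) : mu [b] = [b, !b] := by cases b <;> rfl

lemma mu_append (u v : List Bool) : mu (u ++ v) = mu u ++ mu v := by
  simp [mu, List.flatMap_append]

lemma mu_map_not (v : List Bool) : mu (v.map not) = (mu v).map not := by
  induction v with
  | nil => rfl
  | cons a l ih =>
    have h2 : mu ((a :: l).map not) = mu [!a] ++ mu (l.map not) := by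
      rw [← mu_append]; rfl
    have h3 : mu (a :: l) = mu [a] ++ mu l := by rw [← mu_append]; rfl
    rw [h2, h3, List.map_append, ih, mu_singleton, mu_singleton]
    cases a <;> rfl

lemma factor_mu (k m : ℕ) (hk : 1 ≤ k) :
    factorAt thueMorse (2 * k - 1) (2 * m) = mu (factorAt thueMorse k m) := by
  induction m with
  | zero => simp [factorAt_zero, mu_nil]
  | succ m ih =>
    have h1 : 2 * (m + 1) = 2 * m + 2 := by ring
    rw [h1, factorAt_add, factorAt_two, ih, factorAt_snoc, mu_append, mu_singleton]
    congr 1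
    have e1 : 2 * k - 1 + 2 * m = 2 * (k + m) - 1 := by omega
    have e2 : 2 * k - 1 + 2 * m + 1 = 2 * (k + m) := by omega
    rw [e2, e1, tm_odd (k + m) (by omega), tm_even (k + m) (by omega)]

/- values of t -/
lemma tm_two : thueMorse 2 = true := by
  have := tm_even 1 le_rfl; rw [tm_one] at this; simpa using this
lemma tm_three : thueMorse 3 = true := by
  have := tm_odd 2 (by norm_num); rw [tm_two] at this; simpa using this
lemma tm_four : thueMorse 4 = false := by
  have := tm_even 2 (by norm_num); rw [tm_two] at this; simpa using this
lemma tm_six : thueMorse 6 = false := by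
  have := tm_even 3 (by norm_num); rw [tm_three] at this; simpa using this
lemma tm_seven : thueMorse 7 = false := by
  have := tm_odd 4 (by norm_num); rw [tm_four] at this; simpa using this

/- ### complement closure -/

lemma compl_closed (n : ℕ) : ∀ i, 1 ≤ i →
    ∃ j, 1 ≤ j ∧ factorAt thueMorse j n = (factorAt thueMorse i n).map not := by
  induction n using Nat.strong_induction_on with
  | _ n IH =>
  intro i hi
  match n, hi with
  | 0, _ => exact ⟨1, le_rfl, rfl⟩
  | 1, _ =>
    rcases Bool.eq_false_or_eq_true (thueMorse i) with h | h
    · refine ⟨1, le_rfl, ?_⟩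
      simp [factorAt_succ, factorAt_zero, tm_one, h]
    · refine ⟨2, by norm_num, ?_⟩
      simp [factorAt_succ, factorAt_zero, tm_two, h]
  | 2, _ =>
    have h2 : ∀ j, factorAt thueMorse j 2 = [thueMorse j, thueMorse (j + 1)] := by
      intro j; simp [factorAt_succ, factorAt_zero]
    rw [h2]
    rcases Bool.eq_false_or_eq_true (thueMorse i) with ha | ha <;>
      rcases Bool.eq_false_or_eq_true (thueMorse (i + 1)) with hb | hb
    · exact ⟨6, by norm_num, by rw [h2]; simp [ha, hb, tm_six, tm_seven]⟩
    · exact ⟨1, le_rfl, by rw [h2]; simp [ha, hb, tm_one, tm_two]⟩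
    · exact ⟨3, by norm_num, by rw [h2]; simp [ha, hb, tm_three, tm_four]⟩
    · exact ⟨2, by norm_num, by rw [h2]; simp [ha, hb, tm_two, tm_three]⟩
  | (n + 3), _ =>
    set N := n + 3 with hN
    set m := N / 2 + 1 with hm
    set k := (i + 1) / 2 with hk
    have hk1 : 1 ≤ k := by omega
    have hd : i - (2 * k - 1) ≤ 1 := by omega
    set d := i - (2 * k - 1) with hdd
    have hi' : i = 2 * k - 1 + d := by omega
    have hmn : m < N := by omega
    have hNd : N ≤ 2 * m - d := by omega
    obtain ⟨k', hk'1, hk'⟩ := IH m hmn k hk1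
    refine ⟨2 * k' - 1 + d, by omega, ?_⟩
    have key : factorAt thueMorse (2 * k' - 1) (2 * m) =
        (factorAt thueMorse (2 * k - 1) (2 * m)).map not := by
      rw [factor_mu k' m hk'1, factor_mu k m hk1, hk', mu_map_not]
    have e1 : factorAt thueMorse (2 * k' - 1 + d) N =
        ((factorAt thueMorse (2 * k' - 1) (2 * m)).drop d).take N := by
      rw [factorAt_drop _ _ _ _ (by omega), factorAt_take _ _ _ _ (by omega)]
    have e2 : factorAt thueMorse i N =
        ((factorAt thueMorse (2 * k - 1) (2 * m)).drop d).take N := by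
      rw [factorAt_drop _ _ _ _ (by omega), factorAt_take _ _ _ _ (by omega), ← hi']
    rw [e1, e2, key, ← List.map_drop, ← List.map_take]

/- ### discrete IVT -/

lemma nat_ivt_up (f : ℕ → ℕ) (h1 : ∀ k, f (k + 1) ≤ f k + 1) (a : ℕ) :
    ∀ d i, f i ≤ a → a ≤ f (i + d) → ∃ k, f k = a := by
  intro d
  induction d with
  | zero => intro i h h'; exact ⟨i, le_antisymm (by simpa using h) (by simpa using h')⟩
  | succ d ih =>
    intro i h h'
    rcases le_or_gt a (f (i + d)) with hle | hlt
    · exact ih i h hle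
    · refine ⟨i + d + 1, ?_⟩
      have := h1 (i + d)
      have h'' : a ≤ f (i + d + 1) := by
        have : i + (d + 1) = i + d + 1 := by omega
        rwa [this] at h'
      omega

lemma nat_ivt_down (f : ℕ → ℕ) (h2 : ∀ k, f k ≤ f (k + 1) + 1) (a : ℕ) :
    ∀ d i, f (i + d) ≤ a → a ≤ f i → ∃ k, f k = a := by
  intro d
  induction d with
  | zero => intro i h h'; exact ⟨i, le_antisymm (by simpa using h) (by simpa using h')⟩
  | succ d ih =>
    intro i h h'
    rcases le_or_gt (f (i + d)) a with hle | hlt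
    · exact ih i hle h'
    · refine ⟨i + d + 1, ?_⟩
      have := h2 (i + d)
      have h'' : f (i + d + 1) ≤ a := by
        have e : i + (d + 1) = i + d + 1 := by omega
        rwa [e] at h
      omega

lemma nat_ivt (f : ℕ → ℕ) (h1 : ∀ k, f (k + 1) ≤ f k + 1) (h2 : ∀ k, f k ≤ f (k + 1) + 1)
    (i j a : ℕ) (hi : f i ≤ a) (hj : a ≤ f j) : ∃ k, f k = a := by
  rcases le_total i j with h | h
  · exact nat_ivt_up f h1 a (j - i) i hi (by rwa [Nat.add_sub_cancel' h])
  · exact nat_ivt_down f h2 a (i - j) j (by rwa [Nat.add_sub_cancel' h]) hj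

/- ### main theorem -/

theorem stmt10 (n : ℕ) (hn : 1 ≤ n) :
    redFactorComplexity thueMorse n = 2 * (tmAltMax n - tmAltMin n + 1) := by
  obtain ⟨n', rfl⟩ : ∃ n', n = n' + 1 := ⟨n - 1, by omega⟩
  set n := n' + 1
  set w : ℕ → List Bool := fun i => factorAt thueMorse i n with hw
  have hw_cons : ∀ i, w i = thueMorse i :: factorAt thueMorse (i + 1) n' := by
    intro i; rw [hw]; exact factorAt_succ _ _ _
  set S : Set ℕ := { a : ℕ | ∃ i ≥ 1, a = alt (factorAt thueMorse i n) } with hS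
  have hSne : S.Nonempty := ⟨alt (w 1), 1, le_rfl, rfl⟩
  have hSbdd : BddAbove S := by
    refine ⟨n, ?_⟩
    rintro a ⟨i, hi, rfl⟩
    calc alt (factorAt thueMorse i n) ≤ (factorAt thueMorse i n).length := alt_le_length _
    _ = n := factorAt_length _ _ _
  set m := tmAltMin n with hm
  set M := tmAltMax n with hM
  have hmS : m ∈ S := Nat.sInf_mem hSne
  have hMS : M ∈ S := Nat.sSup_mem hSne hSbdd
  have hmem : ∀ i, 1 ≤ i → alt (w i) ∈ Set.Icc m M := by
    intro i hi
    constructor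
    · exact Nat.sInf_le ⟨i, hi, rfl⟩
    · exact le_csSup hSbdd ⟨i, hi, rfl⟩
  have hmM : m ≤ M := by
    obtain ⟨i, hi, hieq⟩ := hmS
    rw [hieq]
    exact (hmem i hi).2
  -- the sliding function
  set f : ℕ → ℕ := fun k => alt (w (k + 1)) with hf
  have hstep1 : ∀ k, f (k + 1) ≤ f k + 1 := by
    intro k
    have e1 : w (k + 1) = thueMorse (k + 1) :: factorAt thueMorse (k + 2) n' := hw_cons (k + 1)
    have e2 : w (k + 2) = factorAt thueMorse (k + 2) n' ++ [thueMorse (k + 2 + n')] :=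
      factorAt_snoc _ _ _
    show alt (w (k + 2)) ≤ alt (w (k + 1)) + 1
    rw [e1, e2]
    calc alt (factorAt thueMorse (k + 2) n' ++ [thueMorse (k + 2 + n')])
        ≤ alt (factorAt thueMorse (k + 2) n') + 1 := alt_append_le _ _
      _ ≤ alt (thueMorse (k + 1) :: factorAt thueMorse (k + 2) n') + 1 := by
          have := alt_le_alt_cons (thueMorse (k + 1)) (factorAt thueMorse (k + 2) n')
          omega
  have hstep2 : ∀ k, f k ≤ f (k + 1) + 1 := by
    intro k
    have e1 : w (k + 1) = thueMorse (k + 1) :: factorAt thueMorse (k + 2) n' := hw_cons (k + 1)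
    have e2 : w (k + 2) = factorAt thueMorse (k + 2) n' ++ [thueMorse (k + 2 + n')] :=
      factorAt_snoc _ _ _
    show alt (w (k + 1)) ≤ alt (w (k + 2)) + 1
    rw [e1, e2]
    calc alt (thueMorse (k + 1) :: factorAt thueMorse (k + 2) n')
        ≤ alt (factorAt thueMorse (k + 2) n') + 1 := alt_cons_le _ _
      _ ≤ alt (factorAt thueMorse (k + 2) n' ++ [thueMorse (k + 2 + n')]) + 1 := by
          have := alt_le_alt_append (factorAt thueMorse (k + 2) n') (thueMorse (k + 2 + n'))
          omega
  -- every value in [m, M] is attained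
  have hattain : ∀ a ∈ Set.Icc m M, ∃ i, 1 ≤ i ∧ alt (w i) = a := by
    intro a ⟨ham, haM⟩
    obtain ⟨i0, hi0, hi0eq⟩ := hmS
    obtain ⟨i1, hi1, hi1eq⟩ := hMS
    have hfi0 : f (i0 - 1) ≤ a := by
      have e : i0 - 1 + 1 = i0 := by omega
      show alt (w (i0 - 1 + 1)) ≤ a
      rw [e]
      show alt (factorAt thueMorse i0 n) ≤ a
      omega
    have hfi1 : a ≤ f (i1 - 1) := by
      have e : i1 - 1 + 1 = i1 := by omega
      show a ≤ alt (w (i1 - 1 + 1))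
      rw [e]
      show a ≤ alt (factorAt thueMorse i1 n)
      omega
    obtain ⟨k, hk⟩ := nat_ivt f hstep1 hstep2 (i0 - 1) (i1 - 1) a hfi0 hfi1
    exact ⟨k + 1, by omega, hk⟩
  -- attained with both heads
  have hattain2 : ∀ b : Bool, ∀ a ∈ Set.Icc m M,
      ∃ i, 1 ≤ i ∧ alt (w i) = a ∧ thueMorse i = b := by
    intro b a ha
    obtain ⟨i, hi, hia⟩ := hattain a ha
    by_cases hb : thueMorse i = b
    · exact ⟨i, hi, hia, hb⟩
    · obtain ⟨j, hj, hjeq⟩ := compl_closed n i hi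
      have hjw : w j = (w i).map not := hjeq
      refine ⟨j, hj, ?_, ?_⟩
      · rw [hjw, alt_map_not, hia]
      · have h2 := hjw
        rw [hw_cons i, hw_cons j] at h2
        simp only [List.map_cons, List.cons.injEq] at h2
        rw [h2.1]
        rcases Bool.eq_false_or_eq_true (thueMorse i) with ht | ht <;>
          rcases Bool.eq_false_or_eq_true b with hbb | hbb <;> simp_all
  -- set identification
  have hred : ∀ i, red (w i) = altWord (thueMorse i) (alt (w i)) := by
    intro i
    rw [hw_cons i, red_cons, ← hw_cons i]
  have hsetEq : { u : List Bool | ∃ i ≥ 1, u = red (factorAt thueMorse i n) } =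
      (fun p : Bool × ℕ => altWord p.1 p.2) '' ((Set.univ : Set Bool) ×ˢ Set.Icc m M) := by
    ext u
    constructor
    · rintro ⟨i, hi, rfl⟩
      exact ⟨(thueMorse i, alt (w i)), ⟨Set.mem_univ _, hmem i hi⟩, (hred i).symm⟩
    · rintro ⟨⟨b, a⟩, ⟨-, ha⟩, rfl⟩
      obtain ⟨i, hi, hia, hib⟩ := hattain2 b a ha
      exact ⟨i, hi, by rw [hred i, hia, hib]⟩
  rw [redFactorComplexity, hsetEq, Set.ncard_image_of_injective _ altWord_inj]
  have hFin : (Set.univ : Set Bool) ×ˢ Set.Icc m M =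
      ↑((Finset.univ : Finset Bool) ×ˢ Finset.Icc m M) := by
    simp [Finset.coe_product]
    rw [Set.pair_comm]
  rw [hFin, Set.ncard_coe_finset, Finset.card_product, Finset.card_univ, Nat.card_Icc]
  simp only [Fintype.card_bool]
  omega
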